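/- Let p be an odd prime and a, b ∈ (Z/pZ)^× with 4a + b² ≡ 0 (mod p). Let α = b/2, so a = -α² and b = 2α. Define φ on Z/pZ by φ(x) = a·x⁻¹ + b for x ≠ 0 and φ(0) = b. Then α is a fixed point of φ, and for every x₀ ≠ α the orbit of x₀ under φ is purely periodic with least period exactly p - 1. -/

import Mathlib

private lemma natCast_ne_of_lt {p m j : ℕ} (hm : 0 < m) (hmp : m < p) (hj : 0 < j)
    (hjp : j < p) (hne : m ≠ j) : (m : ZMod p) ≠ (j : ZMod p) := by
  intro h
  have h' := (ZMod.natCast_eq_natCast_iff _ _ _).mp h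
  rcases lt_or_gt_of_ne hne with hlt | hlt
  · have hd := (Nat.modEq_iff_dvd' hlt.le).mp h'
    have := Nat.le_of_dvd (by omega) hd
    omega
  · have hd := (Nat.modEq_iff_dvd' hlt.le).mp h'.symm
    have := Nat.le_of_dvd (by omega) hd
    omega

/-- Iterates of the "add `c`, skipping `0`" map. -/
private lemma skip_iter (p : ℕ) [Fact p.Prime] (c : ZMod p) (hc : c ≠ 0)
    (u : ZMod p) (j0 : ℕ) (hj01 : 0 < j0) (hj0p : j0 < p)
    (hj0 : u + (j0 : ZMod p) * c = 0) :
    ∀ k, k ≤ p - 1 →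
      (fun v => if v + c = 0 then v + 2 * c else v + c)^[k] u
        = u + (if k < j0 then (k : ZMod p) else ((k : ZMod p) + 1)) * c := by
  have hp1 : 1 < p := (Fact.out : p.Prime).one_lt
  have key : ∀ m : ℕ, 0 < m → m ≤ p → m ≠ j0 → u + (m : ZMod p) * c ≠ 0 := by
    intro m hm hmp hne h
    rcases eq_or_lt_of_le hmp with heq | hmlt
    · rw [heq, ZMod.natCast_self, zero_mul, add_zero] at h
      rw [h, zero_add] at hj0
      rcases mul_eq_zero.mp hj0 with h0 | h0
      · have : p ∣ j0 := (ZMod.natCast_eq_zero_iff _ _).mp h0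
        have := Nat.le_of_dvd hj01 this
        omega
      · exact hc h0
    · exact absurd (mul_right_cancel₀ hc (by linear_combination h - hj0))
        (natCast_ne_of_lt hm hmlt hj01 hj0p hne)
  intro k
  induction k with
  | zero => intro _; simp [hj01]
  | succ k ih =>
    intro hk
    have hk' : k ≤ p - 1 := by omega
    rw [Function.iterate_succ_apply', ih hk']
    by_cases hkj : k < j0
    · simp only [if_pos hkj]
      rcases eq_or_lt_of_le (Nat.succ_le_of_lt hkj) with heq | hlt
      · -- k + 1 = j0 : skip over zero
        have hcast : (k : ZMod p) + 1 = (j0 : ZMod p) := by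
          rw [← heq]; push_cast; ring
        have hcond : u + (k : ZMod p) * c + c = 0 := by
          linear_combination hj0 + c * hcast
        rw [if_pos hcond, if_neg (by omega)]
        push_cast; ring
      · -- k + 1 < j0 : no skip
        have hcond : u + (k : ZMod p) * c + c ≠ 0 := by
          have hkey := key (k + 1) (by omega) (by omega) (by omega)
          intro h; apply hkey; push_cast; linear_combination h
        rw [if_neg hcond, if_pos hlt]
        push_cast; ring
    · simp only [if_neg hkj]
      have hcond : u + ((k : ZMod p) + 1) * c + c ≠ 0 := by
        have hkey := key (k + 2) (by omega) (by omega) (by omega)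
        intro h; apply hkey; push_cast; linear_combination h
      rw [if_neg hcond, if_neg (by omega)]
      push_cast; ring

/-- If `4a + b² = 0` in `Z/pZ` with `a, b` units, then `α = b/2` is a fixed
point of the inversive map `φ`, and every other orbit is purely periodic with
least period exactly `p - 1`. -/
theorem stmt5 (p : ℕ) (hp : p.Prime) (hp2 : p ≠ 2)
    (a b : ZMod p) (ha : IsUnit a) (hb : IsUnit b)
    (hΔ : 4 * a + b ^ 2 = 0)
    (φ : ZMod p → ZMod p)
    (hφ : ∀ x, φ x = if x ≠ 0 then a * x⁻¹ + b else b) :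
    φ (b * 2⁻¹) = b * 2⁻¹ ∧
    ∀ x0 : ZMod p, x0 ≠ b * 2⁻¹ →
      φ^[p - 1] x0 = x0 ∧ ∀ T, 0 < T → φ^[T] x0 = x0 → p - 1 ≤ T := by
  haveI : Fact p.Prime := ⟨hp⟩
  have hp1 : 1 < p := hp.one_lt
  have h2 : (2 : ZMod p) ≠ 0 := by
    intro h
    have : p ∣ 2 := (ZMod.natCast_eq_zero_iff 2 p).mp (by exact_mod_cast h)
    exact hp2 ((Nat.prime_dvd_prime_iff_eq hp Nat.prime_two).mp this)
  have hb0 : b ≠ 0 := hb.ne_zero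
  set α : ZMod p := b * 2⁻¹ with hα_def
  have hα : α ≠ 0 := mul_ne_zero hb0 (inv_ne_zero h2)
  have ha_eq : a = -α ^ 2 := by
    rw [hα_def]
    field_simp
    linear_combination hΔ
  set c : ZMod p := α⁻¹ with hc_def
  have hc : c ≠ 0 := inv_ne_zero hα
  set ψ : ZMod p → ZMod p := fun v => if v + c = 0 then v + 2 * c else v + c with hψ
  have hb2α : b = 2 * α := by rw [hα_def]; field_simp
  -- one-step conjugation
  have step : ∀ x : ZMod p, x ≠ α → φ x ≠ α ∧ (φ x - α)⁻¹ = ψ ((x - α)⁻¹) := by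
    intro x hx
    by_cases hx0 : x = 0
    · subst hx0
      have hφ0 : φ 0 = 2 * α := by rw [hφ]; simp [hb2α]
      have hcond : (0 - α)⁻¹ + c = 0 := by
        rw [zero_sub, inv_neg, hc_def]; ring
      constructor
      · rw [hφ0]; intro h; apply hα; linear_combination h
      · rw [hφ0]
        simp only [hψ, if_pos hcond]
        rw [hc_def, zero_sub, inv_neg]
        have h21 : 2 * α - α = α := by ring
        rw [h21]; ring
    · have hφx : φ x = a * x⁻¹ + b := by rw [hφ]; simp [hx0]
      have hxα : x - α ≠ 0 := sub_ne_zero.mpr hx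
      have hdiff : φ x - α = α * (x - α) * x⁻¹ := by
        rw [hφx, ha_eq, hb2α]
        field_simp
        ring
      have hne : φ x - α ≠ 0 := by
        rw [hdiff]
        exact mul_ne_zero (mul_ne_zero hα hxα) (inv_ne_zero hx0)
      have hcond : (x - α)⁻¹ + c ≠ 0 := by
        rw [hc_def]
        intro h
        apply hx0
        have h1 : (x - α)⁻¹ = (-α)⁻¹ := by rw [inv_neg]; linear_combination h
        have h2' := inv_injective h1
        linear_combination h2'
      refine ⟨sub_ne_zero.mp hne, ?_⟩
      · simp only [hψ, if_neg hcond]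
        rw [hdiff, hc_def]
        have hprod : ((x - α)⁻¹ + α⁻¹) * (α * (x - α) * x⁻¹) = 1 := by
          field_simp
          ring
        exact inv_eq_of_mul_eq_one_left hprod
  constructor
  · -- fixed point
    rw [hφ]
    rw [if_pos hα]
    rw [ha_eq, hb2α]
    field_simp
    ring
  · intro x0 hx0
    have hu0 : (x0 - α)⁻¹ ≠ 0 := inv_ne_zero (sub_ne_zero.mpr hx0)
    set u : ZMod p := (x0 - α)⁻¹ with hu_def
    have iter : ∀ k, φ^[k] x0 ≠ α ∧ (φ^[k] x0 - α)⁻¹ = ψ^[k] u := by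
      intro k
      induction k with
      | zero => exact ⟨hx0, rfl⟩
      | succ k ih =>
        rw [Function.iterate_succ_apply', Function.iterate_succ_apply']
        obtain ⟨h1, hh2⟩ := ih
        obtain ⟨h3, h4⟩ := step _ h1
        exact ⟨h3, by rw [h4, hh2]⟩
    have hneg : -u * c⁻¹ ≠ 0 := mul_ne_zero (neg_ne_zero.mpr hu0) (inv_ne_zero hc)
    set j0 : ℕ := (-u * c⁻¹).val with hj0def
    have hj0p : j0 < p := ZMod.val_lt _
    have hj0cast : ((j0 : ℕ) : ZMod p) = -u * c⁻¹ := by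
      simp [hj0def, ZMod.natCast_val, ZMod.cast_id]
    have hj01 : 0 < j0 := by
      rcases Nat.eq_zero_or_pos j0 with h0 | h0
      · exfalso; apply hneg; rw [← hj0cast, h0]; simp
      · exact h0
    have hj0 : u + (j0 : ZMod p) * c = 0 := by
      rw [hj0cast]; field_simp; ring
    have hiter := skip_iter p c hc u j0 hj01 hj0p hj0
    have hlast : ψ^[p - 1] u = u := by
      rw [hψ, hiter (p - 1) le_rfl, if_neg (by omega)]
      have hcast : ((p - 1 : ℕ) : ZMod p) + 1 = 0 := by
        rw [Nat.cast_sub hp1.le]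
        simp [ZMod.natCast_self]
      rw [hcast, zero_mul, add_zero]
    obtain ⟨hne1, heq1⟩ := iter (p - 1)
    have hinv : (φ^[p - 1] x0 - α)⁻¹ = (x0 - α)⁻¹ := by rw [heq1, hlast]
    have hsub := inv_injective hinv
    constructor
    · linear_combination hsub
    · intro T hT hTeq
      by_contra hlt
      push_neg at hlt
      have hT' : T ≤ p - 1 := by omega
      obtain ⟨hneT, heqT⟩ := iter T
      rw [hTeq, hψ, hiter T hT'] at heqT
      have hmc : (if T < j0 then (T : ZMod p) else ((T : ZMod p) + 1)) * c = 0 := by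
        linear_combination -heqT
      have hX : (if T < j0 then (T : ZMod p) else ((T : ZMod p) + 1)) = 0 :=
        (mul_eq_zero.mp hmc).resolve_right hc
      by_cases hTj : T < j0
      · rw [if_pos hTj] at hX
        have : p ∣ T := (ZMod.natCast_eq_zero_iff _ _).mp hX
        have := Nat.le_of_dvd hT this
        omega
      · rw [if_neg hTj] at hX
        have hX' : ((T + 1 : ℕ) : ZMod p) = 0 := by push_cast; linear_combination hX
        have : p ∣ T + 1 := (ZMod.natCast_eq_zero_iff _ _).mp hX'
        have := Nat.le_of_dvd (by omega) this
        omega
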